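/- Let d ≥ 1 and let B_j = (u_{1,j}, …, u_{d,j}), j = 1, …, d+1, be mutually unbiased bases of ℂ^d. Then Σ_{j=1}^{d+1} Σ_{i=1}^{d} (1/(d+1))·|u_{i,j} ⊗ ū_{i,j}⟩⟨u_{i,j} ⊗ ū_{i,j}| = T_inv, i.e., the uniform randomization of the d+1 basis measurements realizes T_inv := |φ⁰⟩⟨φ⁰| + (1/(d+1))(I − |φ⁰⟩⟨φ⁰|) on ℂ^d ⊗ ℂ^d. -/

import Mathlib

open scoped BigOperators ComplexInnerProductSpace
open Matrix MeasureTheory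

noncomputable section

/-- `ℂ^d` with the standard Hermitian inner product. -/
abbrev V (d : ℕ) : Type := EuclideanSpace ℂ (Fin d)

/-- `ℂ^d ⊗ ℂ^d`, identified with functions on `Fin d × Fin d`. -/
abbrev V2 (d : ℕ) : Type := EuclideanSpace ℂ (Fin d × Fin d)

/-- operators on `ℂ^d ⊗ ℂ^d`, as matrices. -/
abbrev Op2 (d : ℕ) : Type := Matrix (Fin d × Fin d) (Fin d × Fin d) ℂ

/-- tensor (Kronecker) product of vectors. -/
def tens {d : ℕ} (u v : V d) : V2 d := WithLp.toLp 2 (fun p : Fin d × Fin d => u p.1 * v p.2)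

/-- entrywise complex conjugate `ū` of a vector. -/
def cvec {d : ℕ} (u : V d) : V d := WithLp.toLp 2 (fun k : Fin d => starRingEnd ℂ (u k))

/-- the maximally entangled state `φ⁰ = (1/√d) Σ_k e_k ⊗ e_k`. -/
def phi0 (d : ℕ) : V2 d := WithLp.toLp 2 (fun p : Fin d × Fin d => if p.1 = p.2 then ((Real.sqrt d : ℂ))⁻¹ else 0)

/-- the rank-one operator `|w⟩⟨w|`. -/
def outer {d : ℕ} (w : V2 d) : Op2 d := Matrix.of fun p q => w p * starRingEnd ℂ (w q)

/-- `T_inv = |φ⁰⟩⟨φ⁰| + (1/(d+1))(I - |φ⁰⟩⟨φ⁰|)`. -/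
def Tinv (d : ℕ) : Op2 d := outer (phi0 d) + (1 / ((d : ℂ) + 1)) • (1 - outer (phi0 d))


/-- `u j` is the `j`-th orthonormal basis (`j = 1, …, d+1`); the bases are
mutually unbiased: `|⟨u_{i,j}, u_{i',j'}⟩|² = 1/d` whenever `j ≠ j'`. -/
def IsMUB {d : ℕ} (u : Fin (d + 1) → Fin d → V d) : Prop :=
  (∀ j, Orthonormal ℂ (u j)) ∧
    ∀ j j' i i', j ≠ j' → ‖⟪u j i, u j' i'⟫‖ ^ 2 = 1 / d

open ComplexConjugate

section Aux

lemma sumfactor4 {α : Type*} [Fintype α] (A B C E : α → ℂ) :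
    ∑ a : α, ∑ b : α, ∑ c : α, ∑ e : α, A a * B b * C c * E e
      = (∑ a, A a) * (∑ b, B b) * (∑ c, C c) * (∑ e, E e) := by
  simp only [← Finset.sum_mul, ← Finset.mul_sum]

lemma sumfactor2 {α : Type*} [Fintype α] (A B : α → ℂ) :
    ∑ a : α, ∑ c : α, A a * B c = (∑ a, A a) * (∑ c, B c) := by
  simp only [← Finset.sum_mul, ← Finset.mul_sum]

lemma swap5 {α ι : Type*} [Fintype α] [Fintype ι] (F : ι → α → α → α → α → ℂ) :
    ∑ a, ∑ b, ∑ c, ∑ e, ∑ x, F x a b c e = ∑ x, ∑ a, ∑ b, ∑ c, ∑ e, F x a b c e := by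
  conv_lhs => enter [2, a, 2, b, 2, c]; rw [Finset.sum_comm]
  conv_lhs => enter [2, a, 2, b]; rw [Finset.sum_comm]
  conv_lhs => enter [2, a]; rw [Finset.sum_comm]
  rw [Finset.sum_comm]

lemma swap6 {α ι : Type*} [Fintype α] [Fintype ι] (F : ι → ι → α → α → α → α → ℂ) :
    ∑ a, ∑ b, ∑ c, ∑ e, ∑ x, ∑ y, F x y a b c e
      = ∑ x, ∑ y, ∑ a, ∑ b, ∑ c, ∑ e, F x y a b c e := by
  rw [swap5 (fun x a b c e => ∑ y, F x y a b c e)]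
  exact Finset.sum_congr rfl fun x _ => swap5 (F x)

lemma mubcount (d : ℕ) (hd : 1 ≤ d) :
    ∑ x : Fin (d+1) × Fin d, ∑ y : Fin (d+1) × Fin d,
      (if x.1 = y.1 then (if x.2 = y.2 then (1:ℂ) else 0) else (d:ℂ)⁻¹ * (d:ℂ)⁻¹)
      = 2*(d:ℂ)^2 + 2*(d:ℂ) := by
  have hd0 : (d:ℂ) ≠ 0 := by
    exact Nat.cast_ne_zero.mpr (by omega : d ≠ 0)
  simp_rw [Fintype.sum_prod_type]
  have inner : ∀ j j' : Fin (d+1), (∑ i : Fin d, ∑ i' : Fin d,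
      (if j = j' then (if i = i' then (1:ℂ) else 0) else (d:ℂ)⁻¹ * (d:ℂ)⁻¹))
      = if j = j' then (d:ℂ) else 1 := by
    intro j j'
    by_cases h : j = j'
    · simp [h, Finset.sum_ite_eq, Finset.card_univ]
    · simp only [h, if_false, Finset.sum_const, Finset.card_univ, Fintype.card_fin,
        nsmul_eq_mul]
      field_simp
  calc ∑ j : Fin (d+1), ∑ i : Fin d, ∑ j' : Fin (d+1), ∑ i' : Fin d,
        (if j = j' then (if i = i' then (1:ℂ) else 0) else (d:ℂ)⁻¹ * (d:ℂ)⁻¹)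
      = ∑ j : Fin (d+1), ∑ j' : Fin (d+1), ∑ i : Fin d, ∑ i' : Fin d,
        (if j = j' then (if i = i' then (1:ℂ) else 0) else (d:ℂ)⁻¹ * (d:ℂ)⁻¹) := by
        exact Finset.sum_congr rfl fun j _ => Finset.sum_comm
    _ = ∑ j : Fin (d+1), ∑ j' : Fin (d+1), (if j = j' then (d:ℂ) else 1) :=
        Finset.sum_congr rfl fun j _ => Finset.sum_congr rfl fun j' _ => inner j j'
    _ = 2*(d:ℂ)^2 + 2*(d:ℂ) := by
        have h2 : ∀ j j' : Fin (d+1), (if j = j' then (d:ℂ) else 1)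
            = 1 + (if j = j' then (d:ℂ) - 1 else 0) := by
          intro j j'; split_ifs <;> ring
        simp_rw [h2, Finset.sum_add_distrib, Finset.sum_const, Finset.sum_ite_eq,
          Finset.mem_univ, if_true, Finset.card_univ, Fintype.card_fin, nsmul_eq_mul]
        simp only [Finset.sum_const, Finset.card_univ, Fintype.card_fin, nsmul_eq_mul]
        push_cast
        ring

variable {d : ℕ} (u : Fin (d + 1) → Fin d → V d)

/-- pairwise inner products of all the MUB vectors -/
def mubG : (Fin (d+1) × Fin d) → (Fin (d+1) × Fin d) → ℂ :=
  fun x y => ∑ k, conj (u x.1 x.2 k) * u y.1 y.2 k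

lemma mubG_def (x y : Fin (d+1) × Fin d) :
    ∑ k, conj (u x.1 x.2 k) * u y.1 y.2 k = mubG u x y := rfl

lemma mubG_rev (x y : Fin (d+1) × Fin d) :
    ∑ k, u x.1 x.2 k * conj (u y.1 y.2 k) = mubG u y x := by
  rw [mubG]; exact Finset.sum_congr rfl fun k _ => by ring

lemma mubG_inner (x y : Fin (d+1) × Fin d) : ⟪u x.1 x.2, u y.1 y.2⟫ = mubG u x y := by
  rw [PiLp.inner_apply]; simp [mubG, RCLike.inner_apply]
  exact Finset.sum_congr rfl fun k _ => by ring

lemma mubG_conj (x y : Fin (d+1) × Fin d) : conj (mubG u x y) = mubG u y x := by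
  rw [mubG, map_sum]
  refine Finset.sum_congr rfl fun k _ => ?_
  rw [_root_.map_mul, Complex.conj_conj]; ring

lemma mubG_same (hu : IsMUB u) (x y : Fin (d+1) × Fin d) (h : x.1 = y.1) :
    mubG u x y = if x.2 = y.2 then 1 else 0 := by
  obtain ⟨j, i⟩ := x; obtain ⟨j', i'⟩ := y
  cases h
  rw [← mubG_inner]
  exact orthonormal_iff_ite.mp (hu.1 j) i i'

lemma mubG_self (hu : IsMUB u) (x : Fin (d+1) × Fin d) : mubG u x x = 1 := by
  simp [mubG_same u hu x x rfl]

lemma mubG_cross (hu : IsMUB u) (x y : Fin (d+1) × Fin d) (h : x.1 ≠ y.1) :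
    mubG u x y * conj (mubG u x y) = (d:ℂ)⁻¹ := by
  have h2 := hu.2 x.1 y.1 x.2 y.2 h
  rw [← mubG_inner] at *
  rw [Complex.mul_conj, ← Complex.sq_norm]
  rw [h2]
  push_cast
  rw [one_div]

lemma mubG_mul (hu : IsMUB u) (x y : Fin (d+1) × Fin d) :
    mubG u x y * mubG u y x
      = if x.1 = y.1 then (if x.2 = y.2 then 1 else 0) else (d:ℂ)⁻¹ := by
  rw [show mubG u y x = conj (mubG u x y) from (mubG_conj u x y).symm]
  by_cases h : x.1 = y.1
  · rw [mubG_same u hu x y h]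
    split_ifs <;> simp
  · rw [mubG_cross u hu x y h]
    simp [h]

/-- the fourth-moment sum `S` -/
def mubS : Fin d → Fin d → Fin d → Fin d → ℂ :=
  fun a b c e => ∑ x : Fin (d+1) × Fin d,
    u x.1 x.2 a * conj (u x.1 x.2 b) * conj (u x.1 x.2 c) * u x.1 x.2 e

/-- the target value `T` -/
def mubT (d : ℕ) : Fin d → Fin d → Fin d → Fin d → ℂ :=
  fun a b c e => (if a = b then (1:ℂ) else 0) * (if c = e then (1:ℂ) else 0)
    + (if a = c then (1:ℂ) else 0) * (if b = e then (1:ℂ) else 0)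

lemma mubL1 (hd : 1 ≤ d) (hu : IsMUB u) :
    ∑ a, ∑ b, ∑ c, ∑ e, mubS u a b c e * conj (mubS u a b c e)
      = 2*(d:ℂ)^2 + 2*(d:ℂ) := by
  have step1 : ∀ a b c e : Fin d, mubS u a b c e * conj (mubS u a b c e)
      = ∑ x : Fin (d+1) × Fin d, ∑ y : Fin (d+1) × Fin d,
        (u x.1 x.2 a * conj (u y.1 y.2 a)) * (conj (u x.1 x.2 b) * u y.1 y.2 b) *
        (conj (u x.1 x.2 c) * u y.1 y.2 c) * (u x.1 x.2 e * conj (u y.1 y.2 e)) := by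
    intro a b c e
    rw [mubS, map_sum, Finset.sum_mul_sum]
    refine Finset.sum_congr rfl fun x _ => Finset.sum_congr rfl fun y _ => ?_
    simp only [_root_.map_mul, Complex.conj_conj]
    ring
  simp_rw [step1]
  rw [swap6]
  have step2 : ∀ x y : Fin (d+1) × Fin d,
      (∑ a : Fin d, ∑ b : Fin d, ∑ c : Fin d, ∑ e : Fin d,
        (u x.1 x.2 a * conj (u y.1 y.2 a)) * (conj (u x.1 x.2 b) * u y.1 y.2 b) *
        (conj (u x.1 x.2 c) * u y.1 y.2 c) * (u x.1 x.2 e * conj (u y.1 y.2 e)))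
      = if x.1 = y.1 then (if x.2 = y.2 then (1:ℂ) else 0) else (d:ℂ)⁻¹ * (d:ℂ)⁻¹ := by
    intro x y
    rw [sumfactor4, mubG_rev u x y, mubG_def u x y]
    have h3 : mubG u y x * mubG u x y * mubG u x y * mubG u y x
        = (mubG u x y * mubG u y x) * (mubG u x y * mubG u y x) := by ring
    rw [h3, mubG_mul u hu x y]
    split_ifs <;> simp
  calc ∑ x : Fin (d+1) × Fin d, ∑ y : Fin (d+1) × Fin d, _
      = ∑ x : Fin (d+1) × Fin d, ∑ y : Fin (d+1) × Fin d,
        (if x.1 = y.1 then (if x.2 = y.2 then (1:ℂ) else 0) else (d:ℂ)⁻¹ * (d:ℂ)⁻¹) :=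
        Finset.sum_congr rfl fun x _ => Finset.sum_congr rfl fun y _ => step2 x y
    _ = 2*(d:ℂ)^2 + 2*(d:ℂ) := mubcount d hd

lemma mubcard (d : ℕ) : ∑ _x : Fin (d+1) × Fin d, (1:ℂ) = ((d+1) * d : ℂ) := by
  simp [Finset.card_univ]

lemma mubL2 (hu : IsMUB u) :
    ∑ a, ∑ b, ∑ c, ∑ e, mubS u a b c e * mubT d a b c e = 2*(d:ℂ)^2 + 2*(d:ℂ) := by
  have p1 : ∀ x : Fin (d+1) × Fin d,
      (∑ a : Fin d, ∑ b : Fin d, ∑ c : Fin d, ∑ e : Fin d,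
        (u x.1 x.2 a * conj (u x.1 x.2 b) * conj (u x.1 x.2 c) * u x.1 x.2 e) *
          ((if a = b then (1:ℂ) else 0) * (if c = e then (1:ℂ) else 0))) = 1 := by
    intro x
    have h1 : (∑ a : Fin d, ∑ b : Fin d, ∑ c : Fin d, ∑ e : Fin d,
        (u x.1 x.2 a * conj (u x.1 x.2 b) * conj (u x.1 x.2 c) * u x.1 x.2 e) *
          ((if a = b then (1:ℂ) else 0) * (if c = e then (1:ℂ) else 0)))
        = ∑ a : Fin d, ∑ c : Fin d,
          (u x.1 x.2 a * conj (u x.1 x.2 a)) * (conj (u x.1 x.2 c) * u x.1 x.2 c) := by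
      simp only [mul_ite, ite_mul, mul_one, mul_zero, one_mul, zero_mul,
        Finset.sum_ite_eq, Finset.mem_univ, if_true, Finset.sum_ite_irrel,
        Finset.sum_const_zero]
      exact Finset.sum_congr rfl fun a _ => Finset.sum_congr rfl fun c _ => by ring
    rw [h1, sumfactor2, mubG_rev u x x, mubG_def u x x, mubG_self u hu, one_mul]
  have p2 : ∀ x : Fin (d+1) × Fin d,
      (∑ a : Fin d, ∑ b : Fin d, ∑ c : Fin d, ∑ e : Fin d,
        (u x.1 x.2 a * conj (u x.1 x.2 b) * conj (u x.1 x.2 c) * u x.1 x.2 e) *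
          ((if a = c then (1:ℂ) else 0) * (if b = e then (1:ℂ) else 0))) = 1 := by
    intro x
    have h1 : (∑ a : Fin d, ∑ b : Fin d, ∑ c : Fin d, ∑ e : Fin d,
        (u x.1 x.2 a * conj (u x.1 x.2 b) * conj (u x.1 x.2 c) * u x.1 x.2 e) *
          ((if a = c then (1:ℂ) else 0) * (if b = e then (1:ℂ) else 0)))
        = ∑ a : Fin d, ∑ b : Fin d,
          (u x.1 x.2 a * conj (u x.1 x.2 a)) * (conj (u x.1 x.2 b) * u x.1 x.2 b) := by
      simp only [mul_ite, ite_mul, mul_one, mul_zero, one_mul, zero_mul,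
        Finset.sum_ite_eq, Finset.mem_univ, if_true, Finset.sum_ite_irrel,
        Finset.sum_const_zero]
      exact Finset.sum_congr rfl fun a _ => Finset.sum_congr rfl fun b _ => by ring
    rw [h1, sumfactor2, mubG_rev u x x, mubG_def u x x, mubG_self u hu, one_mul]
  have expand : ∀ a b c e : Fin d, mubS u a b c e * mubT d a b c e
      = (∑ x : Fin (d+1) × Fin d,
          (u x.1 x.2 a * conj (u x.1 x.2 b) * conj (u x.1 x.2 c) * u x.1 x.2 e) *
            ((if a = b then (1:ℂ) else 0) * (if c = e then (1:ℂ) else 0)))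
        + (∑ x : Fin (d+1) × Fin d,
          (u x.1 x.2 a * conj (u x.1 x.2 b) * conj (u x.1 x.2 c) * u x.1 x.2 e) *
            ((if a = c then (1:ℂ) else 0) * (if b = e then (1:ℂ) else 0))) := by
    intro a b c e
    rw [mubS, mubT, mul_add, Finset.sum_mul, Finset.sum_mul]
  simp_rw [expand, Finset.sum_add_distrib]
  rw [swap5, swap5]
  rw [Finset.sum_congr rfl fun x _ => p1 x, Finset.sum_congr rfl fun x _ => p2 x]
  rw [mubcard d]
  push_cast
  ring

lemma mubL3 (hu : IsMUB u) :
    ∑ a, ∑ b, ∑ c, ∑ e, mubT d a b c e * conj (mubS u a b c e)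
      = 2*(d:ℂ)^2 + 2*(d:ℂ) := by
  have p1 : ∀ x : Fin (d+1) × Fin d,
      (∑ a : Fin d, ∑ b : Fin d, ∑ c : Fin d, ∑ e : Fin d,
        (conj (u x.1 x.2 a) * u x.1 x.2 b * (u x.1 x.2 c) * conj (u x.1 x.2 e)) *
          ((if a = b then (1:ℂ) else 0) * (if c = e then (1:ℂ) else 0))) = 1 := by
    intro x
    have h1 : (∑ a : Fin d, ∑ b : Fin d, ∑ c : Fin d, ∑ e : Fin d,
        (conj (u x.1 x.2 a) * u x.1 x.2 b * (u x.1 x.2 c) * conj (u x.1 x.2 e)) *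
          ((if a = b then (1:ℂ) else 0) * (if c = e then (1:ℂ) else 0)))
        = ∑ a : Fin d, ∑ c : Fin d,
          (conj (u x.1 x.2 a) * u x.1 x.2 a) * (u x.1 x.2 c * conj (u x.1 x.2 c)) := by
      simp only [mul_ite, ite_mul, mul_one, mul_zero, one_mul, zero_mul,
        Finset.sum_ite_eq, Finset.mem_univ, if_true, Finset.sum_ite_irrel,
        Finset.sum_const_zero]
      exact Finset.sum_congr rfl fun a _ => Finset.sum_congr rfl fun c _ => by ring
    rw [h1, sumfactor2, mubG_def u x x, mubG_rev u x x, mubG_self u hu, one_mul]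
  have p2 : ∀ x : Fin (d+1) × Fin d,
      (∑ a : Fin d, ∑ b : Fin d, ∑ c : Fin d, ∑ e : Fin d,
        (conj (u x.1 x.2 a) * u x.1 x.2 b * (u x.1 x.2 c) * conj (u x.1 x.2 e)) *
          ((if a = c then (1:ℂ) else 0) * (if b = e then (1:ℂ) else 0))) = 1 := by
    intro x
    have h1 : (∑ a : Fin d, ∑ b : Fin d, ∑ c : Fin d, ∑ e : Fin d,
        (conj (u x.1 x.2 a) * u x.1 x.2 b * (u x.1 x.2 c) * conj (u x.1 x.2 e)) *
          ((if a = c then (1:ℂ) else 0) * (if b = e then (1:ℂ) else 0)))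
        = ∑ a : Fin d, ∑ b : Fin d,
          (conj (u x.1 x.2 a) * u x.1 x.2 a) * (u x.1 x.2 b * conj (u x.1 x.2 b)) := by
      simp only [mul_ite, ite_mul, mul_one, mul_zero, one_mul, zero_mul,
        Finset.sum_ite_eq, Finset.mem_univ, if_true, Finset.sum_ite_irrel,
        Finset.sum_const_zero]
      exact Finset.sum_congr rfl fun a _ => Finset.sum_congr rfl fun b _ => by ring
    rw [h1, sumfactor2, mubG_def u x x, mubG_rev u x x, mubG_self u hu, one_mul]
  have expand : ∀ a b c e : Fin d, mubT d a b c e * conj (mubS u a b c e)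
      = (∑ x : Fin (d+1) × Fin d,
          (conj (u x.1 x.2 a) * u x.1 x.2 b * (u x.1 x.2 c) * conj (u x.1 x.2 e)) *
            ((if a = b then (1:ℂ) else 0) * (if c = e then (1:ℂ) else 0)))
        + (∑ x : Fin (d+1) × Fin d,
          (conj (u x.1 x.2 a) * u x.1 x.2 b * (u x.1 x.2 c) * conj (u x.1 x.2 e)) *
            ((if a = c then (1:ℂ) else 0) * (if b = e then (1:ℂ) else 0))) := by
    intro a b c e
    rw [mubS, map_sum, mubT, add_mul, Finset.mul_sum, Finset.mul_sum]
    congr 1 <;>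
      exact Finset.sum_congr rfl fun x _ => by
        simp only [_root_.map_mul, Complex.conj_conj]; ring
  simp_rw [expand, Finset.sum_add_distrib]
  rw [swap5, swap5]
  rw [Finset.sum_congr rfl fun x _ => p1 x, Finset.sum_congr rfl fun x _ => p2 x]
  rw [mubcard d]
  push_cast
  ring

lemma mubL4 (d : ℕ) :
    ∑ a, ∑ b, ∑ c, ∑ e, mubT d a b c e * mubT d a b c e = 2*(d:ℂ)^2 + 2*(d:ℂ) := by
  have tsq : ∀ a b c e : Fin d, mubT d a b c e * mubT d a b c e
      = mubT d a b c e + 2*((if a = b then (1:ℂ) else 0) * (if c = e then (1:ℂ) else 0)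
          * (if a = c then (1:ℂ) else 0) * (if b = e then (1:ℂ) else 0)) := by
    intro a b c e; rw [mubT]; split_ifs <;> ring
  simp_rw [tsq, Finset.sum_add_distrib]
  have h1 : ∑ a : Fin d, ∑ b : Fin d, ∑ c : Fin d, ∑ e : Fin d, mubT d a b c e
      = 2*(d:ℂ)^2 := by
    simp [mubT, Finset.sum_add_distrib, mul_ite, ite_mul, mul_one, mul_zero,
      Finset.sum_ite_eq, Finset.mem_univ, Finset.sum_const, Finset.card_univ,
      nsmul_eq_mul]
    ring
  have h2 : ∑ a : Fin d, ∑ b : Fin d, ∑ c : Fin d, ∑ e : Fin d,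
      ((if a = b then (1:ℂ) else 0) * (if c = e then (1:ℂ) else 0)
        * (if a = c then (1:ℂ) else 0) * (if b = e then (1:ℂ) else 0)) = (d:ℂ) := by
    simp [mul_ite, ite_mul, mul_one, mul_zero, one_mul, zero_mul,
      Finset.sum_ite_eq, Finset.mem_univ, Finset.sum_const, Finset.card_univ]
  rw [h1]
  simp_rw [← Finset.mul_sum]
  rw [h2]

set_option maxHeartbeats 1000000 in
lemma mub_key (hd : 1 ≤ d) (hu : IsMUB u) (a b c e : Fin d) :
    mubS u a b c e = mubT d a b c e := by
  have hTconj : ∀ a b c e : Fin d, conj (mubT d a b c e) = mubT d a b c e := by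
    intro a b c e
    simp only [mubT, map_add, _root_.map_mul, apply_ite (starRingEnd ℂ), _root_.map_one,
      map_zero]
  have hzero : ∑ a : Fin d, ∑ b : Fin d, ∑ c : Fin d, ∑ e : Fin d,
      (mubS u a b c e - mubT d a b c e) * conj (mubS u a b c e - mubT d a b c e)
      = 0 := by
    have expand : ∀ a b c e : Fin d,
        (mubS u a b c e - mubT d a b c e) * conj (mubS u a b c e - mubT d a b c e)
        = mubS u a b c e * conj (mubS u a b c e) - mubS u a b c e * mubT d a b c e
          - mubT d a b c e * conj (mubS u a b c e) + mubT d a b c e * mubT d a b c e := by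
      intro a b c e
      rw [map_sub, hTconj]
      ring
    simp_rw [expand]
    simp only [Finset.sum_sub_distrib, Finset.sum_add_distrib]
    rw [mubL1 u hd hu, mubL2 u hu, mubL3 u hu, mubL4 d]
    ring
  have hnn : ∑ a : Fin d, ∑ b : Fin d, ∑ c : Fin d, ∑ e : Fin d,
      Complex.normSq (mubS u a b c e - mubT d a b c e) = (0:ℝ) := by
    have h := hzero
    simp_rw [Complex.mul_conj] at h
    exact_mod_cast h
  have h1 := (Finset.sum_eq_zero_iff_of_nonneg
    (fun a _ => Finset.sum_nonneg fun b _ => Finset.sum_nonneg fun c _ =>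
      Finset.sum_nonneg fun e _ => Complex.normSq_nonneg _)).mp hnn a (Finset.mem_univ a)
  have h2 := (Finset.sum_eq_zero_iff_of_nonneg
    (fun b _ => Finset.sum_nonneg fun c _ =>
      Finset.sum_nonneg fun e _ => Complex.normSq_nonneg _)).mp h1 b (Finset.mem_univ b)
  have h3 := (Finset.sum_eq_zero_iff_of_nonneg
    (fun c _ => Finset.sum_nonneg fun e _ => Complex.normSq_nonneg _)).mp h2 c
      (Finset.mem_univ c)
  have h4 := (Finset.sum_eq_zero_iff_of_nonneg
    (fun e _ => Complex.normSq_nonneg _)).mp h3 e (Finset.mem_univ e)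
  have := Complex.normSq_eq_zero.mp h4
  exact sub_eq_zero.mp this

end Aux

set_option maxHeartbeats 1000000 in
/-- The uniform randomization of `d+1` mutually unbiased basis measurements
realizes `T_inv`. -/
theorem stmt9 (d : ℕ) (hd : 1 ≤ d) (u : Fin (d + 1) → Fin d → V d) (hu : IsMUB u) :
    ∑ j, ∑ i, (1 / ((d : ℂ) + 1)) • outer (tens (u j i) (cvec (u j i))) = Tinv d := by
  have hd0 : (d:ℂ) ≠ 0 := by
    exact Nat.cast_ne_zero.mpr (by omega : d ≠ 0)
  have hd1 : (d:ℂ) + 1 ≠ 0 := by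
    have h : ((d+1 : ℕ) : ℂ) ≠ 0 := Nat.cast_ne_zero.mpr (by omega)
    push_cast at h
    exact h
  have hs2 : ((Real.sqrt d : ℂ))⁻¹ * ((Real.sqrt d : ℂ))⁻¹ = (d:ℂ)⁻¹ := by
    rw [← Complex.ofReal_inv, ← Complex.ofReal_mul, ← mul_inv,
      Real.mul_self_sqrt (by positivity)]
    push_cast
    rfl
  ext p q
  have key := mub_key u hd hu p.1 p.2 q.1 q.2
  have lhs_eq : (∑ j, ∑ i, (1 / ((d : ℂ) + 1)) • outer (tens (u j i) (cvec (u j i)))) p q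
      = (1/((d:ℂ)+1)) * mubS u p.1 p.2 q.1 q.2 := by
    rw [mubS, Fintype.sum_prod_type, Finset.mul_sum]
    simp only [Matrix.sum_apply, Matrix.smul_apply, smul_eq_mul, outer, Matrix.of_apply,
      tens, cvec, PiLp.toLp_apply, _root_.map_mul, Complex.conj_conj]
    refine Finset.sum_congr rfl fun j _ => ?_
    rw [Finset.mul_sum]
    refine Finset.sum_congr rfl fun i _ => ?_
    ring
  rw [lhs_eq, key]
  simp only [Tinv, Matrix.add_apply, Matrix.smul_apply, Matrix.sub_apply,
    Matrix.one_apply, outer, Matrix.of_apply, phi0, PiLp.toLp_apply, smul_eq_mul, mubT,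
    apply_ite (conj : ℂ → ℂ), map_zero, Prod.ext_iff]
  have e3 : (if p.1 = q.1 ∧ p.2 = q.2 then (1:ℂ) else 0)
      = (if p.1 = q.1 then (1:ℂ) else 0) * (if p.2 = q.2 then (1:ℂ) else 0) := by
    by_cases hA : p.1 = q.1 <;> by_cases hB : p.2 = q.2 <;> simp [hA, hB]
  have e0 : ((if p.1 = p.2 then ((Real.sqrt d : ℂ))⁻¹ else 0) *
        if q.1 = q.2 then (starRingEnd ℂ) ((Real.sqrt d : ℂ))⁻¹ else 0)
      = (d:ℂ)⁻¹ * ((if p.1 = p.2 then (1:ℂ) else 0) * (if q.1 = q.2 then (1:ℂ) else 0)) := by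
    by_cases hA : p.1 = p.2 <;> by_cases hB : q.1 = q.2 <;> simp [hA, hB, hs2]
  rw [e0, e3]
  generalize (if p.1 = p.2 then (1:ℂ) else 0) = A
  generalize (if q.1 = q.2 then (1:ℂ) else 0) = B
  generalize (if p.1 = q.1 then (1:ℂ) else 0) = C
  generalize (if p.2 = q.2 then (1:ℂ) else 0) = D
  field_simp
  ring

end
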